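/- d(2,2) = 1: the minimum size CAN(2,k,2) of a binary covering array of strength 2 satisfies limsup_{k→∞} CAN(2,k,2)/log₂ k = 1. -/

import Mathlib

open Filter

/-- `A` is a covering array of strength `t`: every `t` distinct columns cover all
`t`-tuples over the alphabet among their rows. -/
def IsCoveringArray {N k v : ℕ} (t : ℕ) (A : Fin N → Fin k → Fin v) : Prop :=
  ∀ cols : Fin t → Fin k, Function.Injective cols →
    ∀ tup : Fin t → Fin v, ∃ r : Fin N, ∀ i, A r (cols i) = tup i

/-- `CAN t k v` is the minimum number of rows of a covering array of strength `t`
with `k` columns over a `v`-letter alphabet. -/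
noncomputable def CAN (t k v : ℕ) : ℕ :=
  sInf {N | ∃ A : Fin N → Fin k → Fin v, IsCoveringArray t A}

section Aux
open Topology

/-- number of columns in the Kleitman–Spencer style construction with `2n` rows -/
def cap (n : ℕ) : ℕ := (2*n-1).choose (n-1)

lemma two_mul_cap (n : ℕ) (hn : 1 ≤ n) : 2 * cap n = Nat.centralBinom n := by
  unfold cap
  obtain ⟨m, rfl⟩ := Nat.exists_eq_add_of_le hn
  rw [Nat.centralBinom_eq_two_mul_choose]
  have h1 : 2 * (1 + m) - 1 = 2*m+1 := by omega
  have h2 : 1 + m - 1 = m := by omega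
  have h3 : 2 * (1 + m) = (2*m+1) + 1 := by omega
  have h4 : 1 + m = m + 1 := by omega
  rw [h1, h2, h3, h4, Nat.choose_succ_succ]
  have h5 : (2*m+1).choose (m+1) = (2*m+1).choose m := by
    rw [← Nat.choose_symm (by omega : m+1 ≤ 2*m+1)]
    congr 1
    omega
  simp only [Nat.succ_eq_add_one] at *
  omega

lemma two_mul_le_two_pow (n : ℕ) (hn : 2 ≤ n) : 2 * n ≤ 2 ^ n := by
  induction n with
  | zero => omega
  | succ m ih =>
    rcases Nat.lt_or_ge m 2 with h | h
    · interval_cases m <;> simp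
    · have h1 := ih (by omega)
      have h2 : 2 ^ m ≥ 2 := Nat.one_lt_two_pow_iff.mpr (by omega)
      rw [pow_succ]
      omega

lemma cap_lb (n : ℕ) (hn : 4 ≤ n) : 2 ^ n < cap n := by
  have h1 : 4 ^ n < n * Nat.centralBinom n := Nat.four_pow_lt_mul_centralBinom n hn
  rw [← two_mul_cap n (by omega)] at h1
  have h2 : 2 * n ≤ 2 ^ n := two_mul_le_two_pow n (by omega)
  have h4 : 4 ^ n = 2 ^ n * 2 ^ n := by
    rw [← mul_pow]; norm_num
  have h5 : (2*n) * cap n ≤ 2^n * cap n := Nat.mul_le_mul_right _ h2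
  have h6 : 2^n * 2^n < 2^n * cap n := by
    calc 2^n * 2^n = 4^n := h4.symm
      _ < n * (2 * cap n) := h1
      _ = (2*n) * cap n := by ring
      _ ≤ 2^n * cap n := h5
  exact Nat.lt_of_mul_lt_mul_left h6

lemma exists_CA (n k : ℕ) (hn : 1 ≤ n) (hk : k ≤ cap n) :
    ∃ A : Fin (2*n) → Fin k → Fin 2, IsCoveringArray 2 A := by
  classical
  set z : Fin (2*n) := ⟨0, by omega⟩ with hz
  set P : Finset (Finset (Fin (2*n))) := (Finset.univ.erase z).powersetCard (n-1) with hP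
  have hcardP : P.card = (2*n-1).choose (n-1) := by
    rw [hP, Finset.card_powersetCard, Finset.card_erase_of_mem (Finset.mem_univ z),
      Finset.card_univ, Fintype.card_fin]
  have hcard : Fintype.card (Fin k) ≤ Fintype.card ↥P := by
    rw [Fintype.card_fin, Fintype.card_coe, hcardP]; exact hk
  obtain ⟨f⟩ := Function.Embedding.nonempty_of_card_le hcard
  have hfz : ∀ c, z ∉ (f c : Finset (Fin (2*n))) := by
    intro c
    have h2 := Finset.mem_powersetCard.mp (f c).2
    intro hzc
    exact (Finset.notMem_erase z _) (h2.1 hzc)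
  have hfcard : ∀ c, ((f c : Finset (Fin (2*n)))).card = n - 1 := by
    intro c
    exact (Finset.mem_powersetCard.mp (f c).2).2
  refine ⟨fun r c => if r = z ∨ r ∈ (f c : Finset (Fin (2*n))) then 1 else 0, ?_⟩
  intro cols hinj tup
  set S : Finset (Fin (2*n)) := (f (cols 0) : Finset (Fin (2*n))) with hS
  set T : Finset (Fin (2*n)) := (f (cols 1) : Finset (Fin (2*n))) with hT
  have hST : S ≠ T := by
    intro h
    have : (0 : Fin 2) = 1 := hinj (f.injective (Subtype.ext h))
    exact absurd this (by decide)
  have hdiff : ∀ (U V : Finset (Fin (2*n))), U ≠ V → U.card = n-1 → V.card = n-1 →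
      ∃ r, r ∈ U ∧ r ∉ V := by
    intro U V hne hU hV
    by_contra h
    push_neg at h
    exact hne (Finset.eq_of_subset_of_card_le h (by omega))
  have key : ∀ a b : Fin 2, ∃ r : Fin (2*n),
      (if r = z ∨ r ∈ S then (1:Fin 2) else 0) = a ∧
      (if r = z ∨ r ∈ T then (1:Fin 2) else 0) = b := by
    intro a b
    have hab : ∀ x : Fin 2, x = 0 ∨ x = 1 := by decide
    rcases hab a with ha | ha <;> rcases hab b with hb | hb <;> subst ha hb
    · have hcard : (insert z (S ∪ T)).card < (Finset.univ : Finset (Fin (2*n))).card := by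
        calc (insert z (S ∪ T)).card ≤ (S ∪ T).card + 1 := Finset.card_insert_le _ _
          _ ≤ (S.card + T.card) + 1 := by
              have := Finset.card_union_le S T; omega
          _ < (Finset.univ : Finset (Fin (2*n))).card := by
              rw [Finset.card_univ, Fintype.card_fin, hS, hT, hfcard, hfcard]; omega
      obtain ⟨r, hr⟩ : ∃ r, r ∉ insert z (S ∪ T) := by
        by_contra h
        push_neg at h
        have hsub : (Finset.univ : Finset (Fin (2*n))) ⊆ insert z (S ∪ T) := fun x _ => h x
        have := Finset.card_le_card hsub
        omega
      refine ⟨r, ?_, ?_⟩ <;> rw [if_neg] <;>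
        simp_all [Finset.mem_insert, Finset.mem_union]
    · obtain ⟨r, hrT, hrS⟩ := hdiff T S (Ne.symm hST) (hT ▸ hfcard _) (hS ▸ hfcard _)
      have hrz : r ≠ z := by intro h; rw [h] at hrT; exact hfz _ hrT
      exact ⟨r, by rw [if_neg (by tauto)], by rw [if_pos (Or.inr hrT)]⟩
    · obtain ⟨r, hrS, hrT⟩ := hdiff S T hST (hS ▸ hfcard _) (hT ▸ hfcard _)
      have hrz : r ≠ z := by intro h; rw [h] at hrS; exact hfz _ hrS
      exact ⟨r, by rw [if_pos (Or.inr hrS)], by rw [if_neg (by tauto)]⟩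
    · exact ⟨z, by rw [if_pos (Or.inl rfl)], by rw [if_pos (Or.inl rfl)]⟩
  obtain ⟨r, h0, h1⟩ := key (tup 0) (tup 1)
  refine ⟨r, fun i => ?_⟩
  have hi : i = 0 ∨ i = 1 := by omega
  rcases hi with hi | hi <;> subst hi <;> assumption

lemma k_le_two_pow {N k : ℕ} (A : Fin N → Fin k → Fin 2) (hA : IsCoveringArray 2 A) :
    k ≤ 2 ^ N := by
  classical
  have hinj : Function.Injective (fun c : Fin k => fun r : Fin N => A r c) := by
    intro c c' h
    by_contra hne
    have hcols : Function.Injective ![c, c'] := by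
      intro i j hij
      fin_cases i <;> fin_cases j <;> simp_all
    obtain ⟨r, hr⟩ := hA ![c, c'] hcols ![0, 1]
    have h0 := hr 0
    have h1 := hr 1
    simp at h0 h1
    have := congrFun h r
    simp at this
    rw [this, h1] at h0
    exact absurd h0 (by decide)
  calc k = Fintype.card (Fin k) := (Fintype.card_fin k).symm
    _ ≤ Fintype.card (Fin N → Fin 2) := Fintype.card_le_of_injective _ hinj
    _ = 2 ^ N := by simp [Fintype.card_fun]

noncomputable def myN (k : ℕ) : ℕ := sInf {n | 4 ≤ n ∧ k ≤ cap n}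

lemma myN_mem (k : ℕ) : 4 ≤ myN k ∧ k ≤ cap (myN k) := by
  have : myN k ∈ {n | 4 ≤ n ∧ k ≤ cap n} := by
    apply Nat.sInf_mem
    refine ⟨max k 4, le_max_right _ _, ?_⟩
    calc k ≤ 2 ^ (max k 4) := le_trans (le_max_left k 4) (Nat.lt_two_pow_self (n := max k 4)).le
      _ ≤ cap (max k 4) := (cap_lb _ (le_max_right _ _)).le
  exact this

lemma CAN_set_nonempty (k : ℕ) :
    {N | ∃ A : Fin N → Fin k → Fin 2, IsCoveringArray 2 A}.Nonempty := by
  obtain ⟨h4, hk⟩ := myN_mem k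
  exact ⟨2 * myN k, exists_CA (myN k) k (by omega) hk⟩

lemma CAN_le (k : ℕ) : CAN 2 k 2 ≤ 2 * myN k := by
  obtain ⟨h4, hk⟩ := myN_mem k
  exact Nat.sInf_le (exists_CA (myN k) k (by omega) hk)

lemma le_CAN (k : ℕ) : k ≤ 2 ^ (CAN 2 k 2) := by
  obtain ⟨A, hA⟩ := Nat.sInf_mem (CAN_set_nonempty k)
  exact k_le_two_pow A hA

lemma myN_min (k : ℕ) (hk : 36 ≤ k) : cap (myN k - 1) < k ∧ 4 ≤ myN k - 1 := by
  obtain ⟨h4, hck⟩ := myN_mem k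
  have h5 : 5 ≤ myN k := by
    by_contra h
    have h44 : myN k = 4 := by omega
    rw [h44] at hck
    have : cap 4 = 35 := by decide
    omega
  have hlt : myN k - 1 < sInf {n | 4 ≤ n ∧ k ≤ cap n} := by
    have : myN k = sInf {n | 4 ≤ n ∧ k ≤ cap n} := rfl
    omega
  have hnot : myN k - 1 ∉ {n | 4 ≤ n ∧ k ≤ cap n} := Nat.notMem_of_lt_sInf hlt
  simp only [Set.mem_setOf_eq, not_and, not_le] at hnot
  exact ⟨hnot (by omega), by omega⟩

lemma CAN_upper (k : ℕ) (hk : 36 ≤ k) :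
    (CAN 2 k 2 : ℝ) ≤ Real.logb 2 (2 * Real.logb 2 k) + Real.logb 2 k + 2 := by
  obtain ⟨hcapm, hm4⟩ := myN_min k hk
  set m : ℕ := myN k - 1 with hm
  have hkpos : (0:ℝ) < k := by positivity
  have h2m : (2:ℝ)^m < k := by
    have hnat : 2^m < k := (cap_lb m hm4).trans hcapm
    exact_mod_cast hnat
  have hmlt : (m:ℝ) < Real.logb 2 k := by
    have := Real.logb_lt_logb (by norm_num : (1:ℝ) < 2) (by positivity) h2m
    rwa [Real.logb_pow, Real.logb_self_eq_one (by norm_num), mul_one] at this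
  have hmpos : (0:ℝ) < m := by exact_mod_cast (by omega : 0 < m)
  have h4m : (4:ℝ)^m < 2*m*k := by
    have hnat : 4^m < 2*m*k := by
      have h1 : 4 ^ m < m * Nat.centralBinom m := Nat.four_pow_lt_mul_centralBinom m hm4
      rw [← two_mul_cap m (by omega)] at h1
      calc 4^m < m * (2 * cap m) := h1
        _ = 2*m*cap m := by ring
        _ ≤ 2*m*k := Nat.mul_le_mul_left _ hcapm.le
    exact_mod_cast hnat
  have h2mlog : 2*(m:ℝ) < Real.logb 2 (2*m) + Real.logb 2 k := by
    have h1 := Real.logb_lt_logb (by norm_num : (1:ℝ) < 2) (by positivity) h4m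
    rw [show ((4:ℝ)^m) = 2^(2*m) by rw [show (4:ℝ) = 2^2 by norm_num, ← pow_mul],
      Real.logb_pow, Real.logb_self_eq_one (by norm_num), mul_one,
      Real.logb_mul (by positivity) (by positivity)] at h1
    exact_mod_cast h1
  have hlogm : Real.logb 2 (2*(m:ℝ)) ≤ Real.logb 2 (2 * Real.logb 2 k) :=
    Real.logb_le_logb_of_le (by norm_num : (1:ℝ) < 2) (by positivity) (by linarith)
  have hCAN : (CAN 2 k 2 : ℝ) ≤ 2*m + 2 := by
    have h := CAN_le k
    have hmn : 2 * myN k = 2*m + 2 := by omega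
    exact_mod_cast (h.trans_eq hmn : CAN 2 k 2 ≤ 2*m+2)
  linarith

lemma CAN_lower (k : ℕ) (hk : 1 ≤ k) : Real.logb 2 k ≤ (CAN 2 k 2 : ℝ) := by
  have h := le_CAN k
  have h' : (k:ℝ) ≤ 2 ^ (CAN 2 k 2) := by exact_mod_cast h
  have := Real.logb_le_logb_of_le (by norm_num : (1:ℝ) < 2) (by positivity) h'
  rwa [Real.logb_pow, Real.logb_self_eq_one (by norm_num), mul_one] at this

end Aux

open Topology in
theorem d_two_two_eq_one :
    Filter.limsup (fun k : ℕ => (CAN 2 k 2 : ℝ) / Real.logb 2 k) Filter.atTop = 1 := by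
  have hL : Tendsto (fun k : ℕ => Real.logb 2 (k:ℝ)) atTop atTop :=
    (Real.tendsto_logb_atTop (by norm_num : (1:ℝ) < 2)).comp tendsto_natCast_atTop_atTop
  have h2 : Tendsto (fun x:ℝ => Real.log x / x) atTop (𝓝 0) := by
    simpa using Real.tendsto_pow_log_div_mul_add_atTop 1 0 1 one_ne_zero
  have hv : Tendsto (fun x : ℝ => (Real.logb 2 (2*x) + 2)/x) atTop (𝓝 0) := by
    have h1 : Tendsto (fun x:ℝ => 3/x) atTop (𝓝 0) := tendsto_const_nhds.div_atTop tendsto_id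
    have h3 : Tendsto (fun x:ℝ => 3/x + (1/Real.log 2) * (Real.log x / x)) atTop (𝓝 0) := by
      have := h1.add (h2.const_mul (1/Real.log 2))
      simpa using this
    apply h3.congr'
    filter_upwards [eventually_gt_atTop 0] with x hx
    rw [Real.logb_mul two_ne_zero (ne_of_gt hx), Real.logb_self_eq_one (by norm_num)]
    rw [Real.logb]
    field_simp
    ring
  have hu : Tendsto (fun k : ℕ => 1 + (Real.logb 2 (2*Real.logb 2 k) + 2)/Real.logb 2 k)
      atTop (𝓝 1) := by
    have := (tendsto_const_nhds (x := (1:ℝ))).add (hv.comp hL)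
    simpa using this
  apply Tendsto.limsup_eq
  apply tendsto_of_tendsto_of_tendsto_of_le_of_le' tendsto_const_nhds hu
  · filter_upwards [eventually_ge_atTop 2] with k hk
    have hL2 : (1:ℝ) ≤ Real.logb 2 k := by
      rw [show (1:ℝ) = Real.logb 2 2 from (Real.logb_self_eq_one (by norm_num)).symm]
      exact Real.logb_le_logb_of_le (by norm_num) (by norm_num) (by exact_mod_cast hk)
    have hlow := CAN_lower k (by omega)
    rw [le_div_iff₀ (by linarith)]
    linarith
  · filter_upwards [eventually_ge_atTop 36] with k hk
    have hL2 : (1:ℝ) ≤ Real.logb 2 k := by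
      rw [show (1:ℝ) = Real.logb 2 2 from (Real.logb_self_eq_one (by norm_num)).symm]
      exact Real.logb_le_logb_of_le (by norm_num) (by norm_num)
        (by exact_mod_cast (by omega : 2 ≤ k))
    have hCAN := CAN_upper k hk
    rw [div_le_iff₀ (by linarith)]
    have heq : (1 + (Real.logb 2 (2*Real.logb 2 k)+2)/Real.logb 2 k) * Real.logb 2 k
        = Real.logb 2 k + (Real.logb 2 (2*Real.logb 2 k)+2) := by
      field_simp
    rw [heq]
    linarith
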